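/- arXiv:2304.14557 — 2 statements merged into one kernel-verified Lean document; each statement's English description precedes it below -/
import Mathlib

section
/- Every acyclic hypergraph is chordal, i.e., every cycle of length at least 4 in its clique-graph has a chord. -/
open Finset

structure FinHypergraph (V : Type*) [DecidableEq V] [Fintype V] where
  edges : Finset (Finset V)

namespace FinHypergraph

variable {V : Type*} [DecidableEq V] [Fintype V]

/-- Two vertex sets touch in `H`: they intersect, or some hyperedge meets both. -/
def touch (H : FinHypergraph V) (S T : Finset V) : Prop :=
  (S ∩ T).Nonempty ∨ ∃ e ∈ H.edges, (e ∩ S).Nonempty ∧ (e ∩ T).Nonempty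

/-- `S` induces a connected subhypergraph of `H`. -/
def connSet (H : FinHypergraph V) (S : Finset V) : Prop :=
  ∀ a ∈ S, ∀ b ∈ S,
    Relation.ReflTransGen (fun x y => x ∈ S ∧ y ∈ S ∧ ∃ e ∈ H.edges, x ∈ e ∧ y ∈ e) a b

/-- An embedding of the `k`-clique into the hypergraph `H`. -/
def IsCliqueEmb (H : FinHypergraph V) (k : ℕ) (ψ : Fin k → Finset V) : Prop :=
  (∀ i, (ψ i).Nonempty) ∧ (∀ i, H.connSet (ψ i)) ∧
    ∀ i j : Fin k, i ≠ j → H.touch (ψ i) (ψ j)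

/-- The weak edge depth of an embedding: the max over hyperedges `e` of the number
of clique vertices whose image meets `e`. -/
def wedOf (H : FinHypergraph V) {k : ℕ} (ψ : Fin k → Finset V) : ℕ :=
  H.edges.sup fun e => (Finset.univ.filter fun i : Fin k => ((ψ i) ∩ e).Nonempty).card

/-- `wed (C_k ↦ H)`: the minimum weak edge depth over embeddings of the `k`-clique. -/
noncomputable def wed (H : FinHypergraph V) (k : ℕ) : ℕ :=
  sInf {w | ∃ ψ : Fin k → Finset V, H.IsCliqueEmb k ψ ∧ H.wedOf ψ ≤ w}

end FinHypergraph

/-- A tree decomposition of a hypergraph. -/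
structure IsTreeDecomp {V : Type*} [DecidableEq V] [Fintype V] {ι : Type*}
    (H : FinHypergraph V) (T : SimpleGraph ι) (χ : ι → Finset V) : Prop where
  tree : T.IsTree
  covers : ∀ e ∈ H.edges, ∃ t, e ⊆ χ t
  conn : ∀ v : V, (T.induce {t | v ∈ χ t}).Connected

/-- The clique-graph of a hypergraph, as a simple graph. -/
def cliqueSG {V : Type*} [DecidableEq V] [Fintype V] (H : FinHypergraph V) :
    SimpleGraph V where
  Adj u v := u ≠ v ∧ ∃ e ∈ H.edges, u ∈ e ∧ v ∈ e
  symm := by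
    constructor
    rintro u v ⟨h, e, he, hu, hv⟩
    exact ⟨h.symm, e, he, hv, hu⟩
  loopless := by
    constructor
    rintro u ⟨h, _⟩
    exact h rfl

/-- A simple graph is chordal: every cycle of length at least 4 has a chord. -/
def IsChordal {W : Type*} (G : SimpleGraph W) : Prop :=
  ∀ ⦃v : W⦄ (c : G.Walk v v), c.IsCycle → 4 ≤ c.length →
    ∃ u w : W, u ∈ c.support ∧ w ∈ c.support ∧ G.Adj u w ∧ s(u, w) ∉ c.edges

/-- A hypergraph is acyclic if it has a tree decomposition whose bags are
hyperedges. -/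
def FinHypergraph.Acyclic {V : Type*} [DecidableEq V] [Fintype V]
    (H : FinHypergraph V) : Prop :=
  ∃ (n : ℕ) (T : SimpleGraph (Fin n)) (χ : Fin n → Finset V),
    IsTreeDecomp H T χ ∧ ∀ t, χ t ∈ H.edges

section AcyclicChordalAux
open SimpleGraph
set_option linter.unusedSectionVars false


variable {ι : Type*} [DecidableEq ι] {T : SimpleGraph ι}


variable {ι : Type*} [DecidableEq ι] {T : SimpleGraph ι}

lemma walk_eq_of_isPath (hT : T.IsAcyclic) {a b : ι} {p q : T.Walk a b}
    (hp : p.IsPath) (hq : q.IsPath) : p = q :=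
  congrArg Subtype.val (hT.path_unique ⟨p, hp⟩ ⟨q, hq⟩)

lemma isPath_length_eq_dist (hT : T.IsTree) {a b : ι} {p : T.Walk a b} (hp : p.IsPath) :
    p.length = T.dist a b := by
  obtain ⟨w, hw⟩ := hT.isConnected.exists_walk_length_eq_dist a b
  refine le_antisymm ?_ (SimpleGraph.dist_le p)
  have h1 : w.bypass = p := walk_eq_of_isPath hT.IsAcyclic w.bypass_isPath hp
  calc p.length = w.bypass.length := by rw [h1]
    _ ≤ w.length := w.length_bypass_le
    _ = T.dist a b := hw

lemma path_support_subset_walk (hT : T.IsAcyclic) {a b : ι} {p : T.Walk a b}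
    (hp : p.IsPath) (w : T.Walk a b) : ∀ x ∈ p.support, x ∈ w.support := by
  have h1 : w.bypass = p := walk_eq_of_isPath hT w.bypass_isPath hp
  intro x hx
  exact w.support_bypass_subset (h1 ▸ hx)

lemma isPath_getVert_inj {a b : ι} {p : T.Walk a b} (hp : p.IsPath) :
    ∀ i j, i ≤ p.length → j ≤ p.length → p.getVert i = p.getVert j → i = j := by
  induction p with
  | nil => intro i j hi hj _; simp at hi hj; omega
  | cons h q ih =>
    rw [Walk.cons_isPath_iff] at hp
    intro i j hi hj hij
    match i, j with
    | 0, 0 => rfl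
    | 0, (j+1) =>
      exfalso
      apply hp.2
      rw [Walk.mem_support_iff_exists_getVert]
      refine ⟨j, ?_, by simpa using hj⟩
      simpa [Walk.getVert_cons_succ] using hij.symm
    | (i+1), 0 =>
      exfalso
      apply hp.2
      rw [Walk.mem_support_iff_exists_getVert]
      refine ⟨i, ?_, by simpa using hi⟩
      simpa [Walk.getVert_cons_succ] using hij
    | (i+1), (j+1) =>
      have := ih hp.1 i j (by simpa using hi) (by simpa using hj)
        (by simpa [Walk.getVert_cons_succ] using hij)
      omega

lemma isCycle_getVert_inj {a : ι} {c : T.Walk a a} (hc : c.IsCycle) :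
    ∀ i j, i < c.length → j < c.length → c.getVert i = c.getVert j → i = j := by
  cases c with
  | nil => intro i j hi; simp at hi
  | cons h q =>
    rw [Walk.cons_isCycle_iff] at hc
    intro i j hi hj hij
    simp only [Walk.length_cons] at hi hj
    match i, j with
    | 0, 0 => rfl
    | 0, (j+1) =>
      exfalso
      have h0 : q.getVert j = q.getVert q.length := by
        rw [q.getVert_length]
        simpa [Walk.getVert_cons_succ] using hij.symm
      have := isPath_getVert_inj hc.1 j q.length (by omega) le_rfl h0
      omega
    | (i+1), 0 =>
      exfalso
      have h0 : q.getVert i = q.getVert q.length := by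
        rw [q.getVert_length]
        simpa [Walk.getVert_cons_succ] using hij
      have := isPath_getVert_inj hc.1 i q.length (by omega) le_rfl h0
      omega
    | (i+1), (j+1) =>
      have := isPath_getVert_inj hc.1 i j (by omega) (by omega)
        (by simpa [Walk.getVert_cons_succ] using hij)
      omega

lemma mem_edges_exists {a b : ι} (w : T.Walk a b) {e} (he : e ∈ w.edges) :
    ∃ l, l < w.length ∧ e = s(w.getVert l, w.getVert (l + 1)) := by
  induction w with
  | nil => simp at he
  | cons h q ih =>
    rw [Walk.edges_cons, List.mem_cons] at he
    rcases he with rfl | he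
    · exact ⟨0, by simp, by simp [Walk.getVert_cons_succ]⟩
    · obtain ⟨l, hl, rfl⟩ := ih he
      exact ⟨l + 1, by simp [hl], by simp [Walk.getVert_cons_succ]⟩



lemma zmod_nat_ne_zero' {k : ℕ} [NeZero k] (hk : 4 ≤ k) {a : ℕ} (ha0 : 0 < a) (ha : a < 4) :
    (a : ZMod k) ≠ 0 := by
  intro h
  have := (ZMod.natCast_eq_zero_iff a k).mp h
  have := Nat.le_of_dvd ha0 this
  omega




lemma tree_key [Fintype ι] (hT : T.IsTree)
    {k : ℕ} [NeZero k] (hk : 4 ≤ k) :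
    ∀ (N : ℕ) (S : ZMod k → Finset ι),
      (Finset.univ.biUnion S).card ≤ N →
      (∀ i, (S i).Nonempty) →
      (∀ i, ∀ a ∈ S i, ∀ b ∈ S i, ∀ p : T.Walk a b, p.IsPath → ∀ x ∈ p.support, x ∈ S i) →
      (∀ i, ((S i) ∩ (S (i + 1))).Nonempty) →
      ∃ i j : ZMod k, i ≠ j ∧ j ≠ i + 1 ∧ i ≠ j + 1 ∧ ((S i) ∩ (S j)).Nonempty := by
  have h1 : ((1 : ℕ) : ZMod k) = (1 : ZMod k) := by push_cast; ring
  have h2 : ((2 : ℕ) : ZMod k) = (2 : ZMod k) := by push_cast; ring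
  have h3 : ((3 : ℕ) : ZMod k) = (3 : ZMod k) := by push_cast; ring
  have hone : (1 : ZMod k) ≠ 0 := h1 ▸ zmod_nat_ne_zero' hk (by omega) (by omega)
  have htwo : (2 : ZMod k) ≠ 0 := h2 ▸ zmod_nat_ne_zero' hk (by omega) (by omega)
  have hthree : (3 : ZMod k) ≠ 0 := h3 ▸ zmod_nat_ne_zero' hk (by omega) (by omega)
  intro N
  induction N with
  | zero =>
    intro S hcard hne _ _
    exfalso
    obtain ⟨x, hx⟩ := hne 0
    have : x ∈ Finset.univ.biUnion S := Finset.mem_biUnion.mpr ⟨0, Finset.mem_univ _, hx⟩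
    have := Finset.card_pos.mpr ⟨x, this⟩
    omega
  | succ N ih =>
    intro S hcard hne hconv hcons
    set U : Finset ι := Finset.univ.biUnion S with hU
    have hSU : ∀ i, S i ⊆ U := fun i x hx => Finset.mem_biUnion.mpr ⟨i, Finset.mem_univ _, hx⟩
    obtain ⟨x0, hx0⟩ := hne 0
    have hUne : U.Nonempty := ⟨x0, hSU 0 hx0⟩
    by_cases hU1 : U.card ≤ 1
    · -- U is a singleton; all S i = U
      obtain ⟨u, hu⟩ := Finset.card_eq_one.mp (le_antisymm hU1 (Finset.card_pos.mpr hUne))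
      have hall : ∀ i, u ∈ S i := by
        intro i
        obtain ⟨y, hy⟩ := hne i
        have : y ∈ U := hSU i hy
        rw [hu, Finset.mem_singleton] at this
        rwa [this] at hy
      refine ⟨0, 2, ?_, ?_, ?_, u, Finset.mem_inter.mpr ⟨hall 0, hall 2⟩⟩
      · intro h; exact htwo (by linear_combination -h)
      · intro h; exact hone (by linear_combination h)
      · intro h; exact hthree (by linear_combination -h)
    · -- pick a farthest point t from some r in U
      push_neg at hU1
      obtain ⟨r, hr⟩ := hUne
      obtain ⟨t, htU, hmax⟩ := Finset.exists_max_image U (fun x => T.dist r x) ⟨r, hr⟩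
      have htr : t ≠ r := by
        rintro rfl
        obtain ⟨u, huU, hur⟩ := Finset.exists_mem_ne hU1 t
        have hpos : 0 < T.dist t u := hT.isConnected.pos_dist_of_ne (Ne.symm hur)
        have h2 := hmax u huU
        rw [SimpleGraph.dist_self] at h2
        omega
      obtain ⟨P, hP, -⟩ := hT.existsUnique_path t r
      have hPlen : 0 < P.length := by
        rcases Nat.eq_zero_or_pos P.length with h | h
        · exact absurd (SimpleGraph.Walk.eq_of_length_eq_zero h) htr
        · exact h
      set par := P.getVert 1 with hpar
      have hadjpar : T.Adj t par := by
        have := P.adj_getVert_succ (i := 0) hPlen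
        simpa using this
      -- Fact A
      have factA : ∀ s, T.Adj t s → s ∈ U → s = par := by
        intro s hadj hsU
        obtain ⟨Ps, hPs, -⟩ := hT.existsUnique_path s r
        have hts : t ∉ Ps.support := by
          intro hmem
          have hlen := congrArg SimpleGraph.Walk.length (Ps.take_spec hmem)
          rw [SimpleGraph.Walk.length_append] at hlen
          have htake : 0 < (Ps.takeUntil t hmem).length := by
            rcases Nat.eq_zero_or_pos (Ps.takeUntil t hmem).length with h | h
            · exact absurd (SimpleGraph.Walk.eq_of_length_eq_zero h) hadj.ne'
            · exact h
          have hdrop : T.dist t r ≤ (Ps.dropUntil t hmem).length :=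
            SimpleGraph.dist_le _
          have hPs_len : Ps.length = T.dist s r := isPath_length_eq_dist hT hPs
          have hd1 : T.dist r s ≤ T.dist r t := hmax s hsU
          rw [SimpleGraph.dist_comm] at hd1
          have hd2 : T.dist r t = T.dist t r := SimpleGraph.dist_comm ..
          omega
        have hQ : (SimpleGraph.Walk.cons hadj Ps).IsPath := hPs.cons hts
        have heq : SimpleGraph.Walk.cons hadj Ps = P :=
          walk_eq_of_isPath hT.IsAcyclic hQ hP
        have : (SimpleGraph.Walk.cons hadj Ps).getVert 1 = s := by
          simp [SimpleGraph.Walk.getVert_cons_succ]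
        rw [heq] at this
        exact this.symm
      by_cases hsing : ∃ i, t ∈ S i ∧ S i = {t}
      · obtain ⟨i, htS, hSi⟩ := hsing
        have hprev : t ∈ S (i - 1) := by
          obtain ⟨y, hy⟩ := hcons (i - 1)
          rw [Finset.mem_inter] at hy
          have hy2 : y ∈ S i := by
            have hcan : i - 1 + 1 = i := by ring
            have := hy.2
            rwa [hcan] at this
          rw [hSi, Finset.mem_singleton] at hy2
          exact hy2 ▸ hy.1
        have hnext : t ∈ S (i + 1) := by
          obtain ⟨y, hy⟩ := hcons i
          rw [Finset.mem_inter] at hy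
          have : y ∈ S i := hy.1
          rw [hSi, Finset.mem_singleton] at this
          rw [← this]; exact hy.2
        refine ⟨i - 1, i + 1, ?_, ?_, ?_, t, Finset.mem_inter.mpr ⟨hprev, hnext⟩⟩
        · intro h; exact htwo (by linear_combination -h)
        · intro h; exact hone (by linear_combination h)
        · intro h; exact hthree (by linear_combination -h)
      · push_neg at hsing
        have hpar_mem : ∀ i, t ∈ S i → par ∈ S i := by
          intro i hti
          have hex : ∃ x ∈ S i, x ≠ t := by
            by_contra hco
            push_neg at hco
            apply hsing i hti
            apply Finset.eq_singleton_iff_unique_mem.mpr ⟨hti, fun x hx => hco x hx⟩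
          obtain ⟨x, hxS, hxt⟩ := hex
          obtain ⟨Q, hQp, -⟩ := hT.existsUnique_path t x
          have hQlen : 0 < Q.length := by
            rcases Nat.eq_zero_or_pos Q.length with h | h
            · exact absurd (SimpleGraph.Walk.eq_of_length_eq_zero h) (Ne.symm hxt)
            · exact h
          have hs0 : Q.getVert 1 ∈ Q.support :=
            SimpleGraph.Walk.mem_support_iff_exists_getVert.mpr ⟨1, rfl, by omega⟩
          have hs0S : Q.getVert 1 ∈ S i := hconv i t hti x hxS Q hQp _ hs0
          have hadj0 : T.Adj t (Q.getVert 1) := by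
            have := Q.adj_getVert_succ (i := 0) hQlen
            simpa using this
          have := factA (Q.getVert 1) hadj0 (hSU i hs0S)
          rwa [this] at hs0S
        set S' : ZMod k → Finset ι := fun i => (S i).erase t with hS'
        have hS'sub : ∀ i, S' i ⊆ S i := fun i => Finset.erase_subset _ _
        have hpt : par ≠ t := hadjpar.ne'
        refine (ih S' ?_ ?_ ?_ ?_).imp fun i h => h.imp fun j ⟨a1, a2, a3, x, hx⟩ =>
          ⟨a1, a2, a3, x, Finset.mem_inter.mpr
            ⟨hS'sub i (Finset.mem_inter.mp hx).1, hS'sub j (Finset.mem_inter.mp hx).2⟩⟩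
        · -- card
          have hsub : Finset.univ.biUnion S' ⊆ U.erase t := by
            intro x hx
            obtain ⟨i, -, hxi⟩ := Finset.mem_biUnion.mp hx
            exact Finset.mem_erase.mpr ⟨(Finset.mem_erase.mp hxi).1, hSU i (hS'sub i hxi)⟩
          calc (Finset.univ.biUnion S').card ≤ (U.erase t).card := Finset.card_le_card hsub
            _ = U.card - 1 := Finset.card_erase_of_mem htU
            _ ≤ N := by omega
        · -- nonempty
          intro i
          by_cases hti : t ∈ S i
          · exact ⟨par, Finset.mem_erase.mpr ⟨hpt, hpar_mem i hti⟩⟩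
          · obtain ⟨y, hy⟩ := hne i
            exact ⟨y, Finset.mem_erase.mpr ⟨fun h => hti (h ▸ hy), hy⟩⟩
        · -- convex
          intro i a ha b hb p hp x hx
          have haS := hS'sub i ha
          have hbS := hS'sub i hb
          have hxS : x ∈ S i := hconv i a haS b hbS p hp x hx
          refine Finset.mem_erase.mpr ⟨?_, hxS⟩
          rintro rfl
          obtain ⟨m, hm, hmle⟩ := SimpleGraph.Walk.mem_support_iff_exists_getVert.mp hx
          have hm0 : m ≠ 0 := by
            rintro rfl
            rw [SimpleGraph.Walk.getVert_zero] at hm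
            exact (Finset.mem_erase.mp ha).1 hm
          have hmlen : m ≠ p.length := by
            rintro rfl
            rw [SimpleGraph.Walk.getVert_length] at hm
            exact (Finset.mem_erase.mp hb).1 hm
          have hn1 : T.Adj x (p.getVert (m - 1)) := by
            have := p.adj_getVert_succ (i := m - 1) (by omega)
            have hm1 : m - 1 + 1 = m := by omega
            rw [hm1, hm] at this
            exact this.symm
          have hn2 : T.Adj x (p.getVert (m + 1)) := by
            have := p.adj_getVert_succ (i := m) (by omega)
            rwa [hm] at this
          have hmem1 : p.getVert (m - 1) ∈ S i :=
            hconv i a haS b hbS p hp _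
              (SimpleGraph.Walk.mem_support_iff_exists_getVert.mpr ⟨m - 1, rfl, by omega⟩)
          have hmem2 : p.getVert (m + 1) ∈ S i :=
            hconv i a haS b hbS p hp _
              (SimpleGraph.Walk.mem_support_iff_exists_getVert.mpr ⟨m + 1, rfl, by omega⟩)
          have e1 := factA _ hn1 (hSU i hmem1)
          have e2 := factA _ hn2 (hSU i hmem2)
          have : p.getVert (m - 1) = p.getVert (m + 1) := by rw [e1, e2]
          have := isPath_getVert_inj hp (m - 1) (m + 1) (by omega) (by omega) this
          omega
        · -- consecutive intersections
          intro i
          obtain ⟨y, hy⟩ := hcons i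
          rw [Finset.mem_inter] at hy
          by_cases hyt : y = t
          · subst hyt
            exact ⟨par, Finset.mem_inter.mpr
              ⟨Finset.mem_erase.mpr ⟨hpt, hpar_mem i hy.1⟩,
               Finset.mem_erase.mpr ⟨hpt, hpar_mem (i + 1) hy.2⟩⟩⟩
          · exact ⟨y, Finset.mem_inter.mpr
              ⟨Finset.mem_erase.mpr ⟨hyt, hy.1⟩, Finset.mem_erase.mpr ⟨hyt, hy.2⟩⟩⟩


end AcyclicChordalAux

/-- Every acyclic hypergraph is chordal: every cycle of length at least 4 in its
clique-graph has a chord. -/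


theorem acyclic_chordal {V : Type*} [DecidableEq V] [Fintype V]
    (H : FinHypergraph V) (h : H.Acyclic) : IsChordal (cliqueSG H) := by
  obtain ⟨n, T, χ, hdec, hbag⟩ := h
  intro v c hc hlen
  by_contra hcon
  push_neg at hcon
  set k := c.length with hk
  haveI : NeZero k := ⟨by omega⟩
  have hval : ∀ i : ZMod k, i.val < k := fun i => ZMod.val_lt i
  set f : ZMod k → V := fun i => c.getVert i.val with hf
  -- getVert of casts
  have hfc : ∀ m : ℕ, m ≤ k → c.getVert m = f ((m : ℕ) : ZMod k) := by
    intro m hm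
    simp only [hf]
    rw [ZMod.val_natCast]
    rcases Nat.lt_or_ge m k with h | h
    · rw [Nat.mod_eq_of_lt h]
    · have hmk : m = k := by omega
      subst hmk
      rw [Nat.mod_self, SimpleGraph.Walk.getVert_zero, hk]
      exact c.getVert_length
  have hfinj : Function.Injective f := by
    intro i j hij
    have := isCycle_getVert_inj hc i.val j.val (hval i) (hval j) hij
    exact ZMod.val_injective k this
  -- consecutive getVert images share a hyperedge; build S
  set S : ZMod k → Finset (Fin n) := fun i => Finset.univ.filter (fun t => f i ∈ χ t) with hS
  have hmemS : ∀ (i : ZMod k) (t : Fin n), t ∈ S i ↔ f i ∈ χ t := by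
    intro i t; simp [hS]
  have hsucc : ∀ i : ZMod k, f (i + 1) = c.getVert (i.val + 1) := by
    intro i
    have h1 : (i + 1 : ZMod k) = ((i.val + 1 : ℕ) : ZMod k) := by
      push_cast
      rw [ZMod.natCast_val, ZMod.cast_id]
    rw [h1, ← hfc (i.val + 1) (by have := hval i; omega)]
  have hadj : ∀ i : ZMod k, (cliqueSG H).Adj (f i) (f (i + 1)) := by
    intro i
    rw [hsucc i]
    exact c.adj_getVert_succ (hval i)
  have hcons : ∀ i : ZMod k, (S i ∩ S (i + 1)).Nonempty := by
    intro i
    obtain ⟨-, e, he, h1, h2⟩ := hadj i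
    obtain ⟨t, ht⟩ := hdec.covers e he
    exact ⟨t, Finset.mem_inter.mpr ⟨(hmemS i t).mpr (ht h1), (hmemS (i + 1) t).mpr (ht h2)⟩⟩
  have hne : ∀ i : ZMod k, (S i).Nonempty := by
    intro i
    obtain ⟨t, ht⟩ := hcons i
    exact ⟨t, (Finset.mem_inter.mp ht).1⟩
  -- convexity
  have hconv : ∀ i : ZMod k, ∀ a ∈ S i, ∀ b ∈ S i, ∀ p : T.Walk a b, p.IsPath →
      ∀ x ∈ p.support, x ∈ S i := by
    intro i a ha b hb p hp x hx
    set s : Set (Fin n) := {t | f i ∈ χ t} with hsdef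
    have ha' : a ∈ s := (hmemS i a).mp ha
    have hb' : b ∈ s := (hmemS i b).mp hb
    obtain ⟨W⟩ := (hdec.conn (f i)).preconnected ⟨a, ha'⟩ ⟨b, hb'⟩
    have hWmap := W.map (SimpleGraph.Embedding.induce s).toHom
    set W' : T.Walk a b := W.map (SimpleGraph.Embedding.induce s).toHom with hW'
    have hsupp : ∀ y ∈ W'.support, y ∈ s := by
      intro y hy
      have key : ∀ z ∈ (W.map (SimpleGraph.Embedding.induce s).toHom).support, z ∈ s := by
        intro z hz
        rw [SimpleGraph.Walk.support_map, List.mem_map] at hz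
        obtain ⟨w, -, rfl⟩ := hz
        exact w.2
      exact key y hy
    have hbp : W'.bypass = p := walk_eq_of_isPath hdec.tree.IsAcyclic W'.bypass_isPath hp
    have hxs : x ∈ s := hsupp x (W'.support_bypass_subset (hbp ▸ hx))
    exact (hmemS i x).mpr hxs
  obtain ⟨i, j, hij, hji1, hij1, t, ht⟩ :=
    tree_key hdec.tree (k := k) (by omega) (Finset.univ.biUnion S).card S le_rfl hne hconv hcons
  rw [Finset.mem_inter] at ht
  have hfi : f i ∈ χ t := (hmemS i t).mp ht.1
  have hfj : f j ∈ χ t := (hmemS j t).mp ht.2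
  have hfne : f i ≠ f j := fun hco => hij (hfinj hco)
  have hAdj : (cliqueSG H).Adj (f i) (f j) := ⟨hfne, χ t, hbag t, hfi, hfj⟩
  have hsupi : f i ∈ c.support :=
    SimpleGraph.Walk.mem_support_iff_exists_getVert.mpr ⟨i.val, rfl, le_of_lt (hval i)⟩
  have hsupj : f j ∈ c.support :=
    SimpleGraph.Walk.mem_support_iff_exists_getVert.mpr ⟨j.val, rfl, le_of_lt (hval j)⟩
  have hedge := hcon (f i) (f j) hsupi hsupj hAdj
  obtain ⟨l, hl, heq⟩ := mem_edges_exists c hedge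
  rw [hfc l (by omega), hfc (l + 1) (by omega)] at heq
  rw [Sym2.eq_iff] at heq
  have hcast : ((l + 1 : ℕ) : ZMod k) = ((l : ℕ) : ZMod k) + 1 := by push_cast; ring
  rcases heq with ⟨e1, e2⟩ | ⟨e1, e2⟩
  · have hi' := hfinj e1
    have hj' := hfinj e2
    apply hji1
    rw [hj', hi', hcast]
  · have hi' := hfinj e1
    have hj' := hfinj e2
    apply hij1
    rw [hi', hj', hcast]
end

section
/- For the (ℓ,k)-hyperclique hypergraph H_{ℓ,k} with 1 < k ≤ ℓ, the identity embedding of the ℓ-clique (mapping i to {x_i}) has weak edge depth k, and H_{ℓ,k} has a fractional edge cover of total weight ℓ/k; hence emb(H_{ℓ,k}) = subw(H_{ℓ,k}) = fhw(H_{ℓ,k}) = ℓ/k. -/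
open Finset

/-- The clique embedding power of a hypergraph. -/
noncomputable def embPower {V : Type*} [DecidableEq V] [Fintype V] (H : FinHypergraph V) : ℝ :=
  sSup {x : ℝ | ∃ k : ℕ, 3 ≤ k ∧ x = (k : ℝ) / (H.wed k : ℝ)}

/-- A set function is submodular. -/
def Submodular {V : Type*} [DecidableEq V] (F : Finset V → ℝ) : Prop :=
  ∀ A B : Finset V, F (A ∪ B) + F (A ∩ B) ≤ F A + F B

/-- The submodular width of a hypergraph. -/
noncomputable def subw {V : Type*} [DecidableEq V] [Fintype V] (H : FinHypergraph V) : ℝ :=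
  sSup {w : ℝ | ∃ F : Finset V → ℝ,
    (∀ S, 0 ≤ F S) ∧ (∀ A B : Finset V, A ⊆ B → F A ≤ F B) ∧ Submodular F ∧
    (∀ e ∈ H.edges, F e ≤ 1) ∧
    w = sInf {b : ℝ | ∃ (n : ℕ) (T : SimpleGraph (Fin n)) (χ : Fin n → Finset V),
      IsTreeDecomp H T χ ∧ ∀ t, F (χ t) ≤ b}}

/-- `w` is a fractional edge cover of the vertex set `S` in `H`. -/
def IsFracCover {W : Type*} [DecidableEq W] [Fintype W] (H : FinHypergraph W)
    (S : Finset W) (w : Finset W → ℝ) : Prop :=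
  (∀ e, 0 ≤ w e) ∧ (∀ e ∉ H.edges, w e = 0) ∧
    ∀ v ∈ S, 1 ≤ ∑ e ∈ H.edges, (if v ∈ e then w e else 0)

/-- The fractional hypertree width of a hypergraph: the minimum over tree
decompositions of the maximum fractional edge cover number of a bag. -/
noncomputable def fhw {V : Type*} [DecidableEq V] [Fintype V] (H : FinHypergraph V) : ℝ :=
  sInf {b : ℝ | ∃ (n : ℕ) (T : SimpleGraph (Fin n)) (χ : Fin n → Finset V),
    IsTreeDecomp H T χ ∧ ∀ t, ∃ w : Finset V → ℝ,
      IsFracCover H (χ t) w ∧ ∑ e ∈ H.edges, w e ≤ b}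

/-- The `(ℓ,k)`-hyperclique: vertices `Fin ℓ`, hyperedges all `k`-element subsets. -/
def hyperclique (ℓ k : ℕ) : FinHypergraph (Fin ℓ) :=
  ⟨Finset.univ.powersetCard k⟩


section HypercliqueAux
open Finset

namespace HCAux

lemma pair_edge {ℓ k : ℕ} (hk1 : 1 < k) (hkℓ : k ≤ ℓ) (i j : Fin ℓ) :
    ∃ e ∈ (univ : Finset (Fin ℓ)).powersetCard k, i ∈ e ∧ j ∈ e := by
  have h2 : ({i, j} : Finset (Fin ℓ)).card ≤ k := by
    calc ({i, j} : Finset (Fin ℓ)).card ≤ ({j} : Finset (Fin ℓ)).card + 1 :=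
        Finset.card_insert_le _ _
    _ ≤ k := by simp; omega
  obtain ⟨e, hsub, hsub2, hcard⟩ := Finset.exists_subsuperset_card_eq
    (Finset.subset_univ ({i,j} : Finset (Fin ℓ))) h2 (by simpa using hkℓ)
  exact ⟨e, by simp [Finset.mem_powersetCard, hsub2, hcard], hsub (by simp), hsub (by simp)⟩

lemma count_mem {ℓ k : ℕ} (hk1 : 1 ≤ k) (hkℓ : k ≤ ℓ) (v : Fin ℓ) :
    (((univ : Finset (Fin ℓ)).powersetCard k).filter (fun e => v ∈ e)).card
      = (ℓ-1).choose (k-1) := by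
  classical
  have key : (((univ : Finset (Fin ℓ)).powersetCard k).filter (fun e => v ∈ e)).card
      = ((univ.erase v).powersetCard (k-1)).card := by
    apply Finset.card_bij' (i := fun e _ => e.erase v) (j := fun s _ => insert v s)
    case hi =>
      intro e he
      rw [Finset.mem_filter, Finset.mem_powersetCard] at he
      rw [Finset.mem_powersetCard]
      refine ⟨fun x hx => ?_, ?_⟩
      · rw [Finset.mem_erase] at hx
        exact Finset.mem_erase.2 ⟨hx.1, Finset.mem_univ _⟩
      · rw [Finset.card_erase_of_mem he.2, he.1.2]
    case hj =>
      intro s hs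
      rw [Finset.mem_powersetCard] at hs
      have hv : v ∉ s := fun h => (Finset.mem_erase.1 (hs.1 h)).1 rfl
      rw [Finset.mem_filter, Finset.mem_powersetCard]
      refine ⟨⟨Finset.subset_univ _, ?_⟩, Finset.mem_insert_self _ _⟩
      rw [Finset.card_insert_of_notMem hv, hs.2]
      omega
    case left_inv =>
      intro e he
      rw [Finset.mem_filter] at he
      exact Finset.insert_erase he.2
    case right_inv =>
      intro s hs
      rw [Finset.mem_powersetCard] at hs
      exact Finset.erase_insert (fun h => (Finset.mem_erase.1 (hs.1 h)).1 rfl)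
  rw [key, Finset.card_powersetCard, Finset.card_erase_of_mem (Finset.mem_univ v),
    Finset.card_univ, Fintype.card_fin]

lemma choose_identity {ℓ k : ℕ} (hk1 : 1 ≤ k) (hkℓ : k ≤ ℓ) :
    k * ℓ.choose k = ℓ * (ℓ-1).choose (k-1) := by
  obtain ⟨a, rfl⟩ : ∃ a, ℓ = a + 1 := ⟨ℓ - 1, by omega⟩
  obtain ⟨b, rfl⟩ : ∃ b, k = b + 1 := ⟨k - 1, by omega⟩
  simpa [Nat.succ_sub_one, mul_comm] using (Nat.add_one_mul_choose_eq a b).symm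

/-- prefix set -/
def pre (ℓ : ℕ) (m : ℕ) : Finset (Fin ℓ) := univ.filter (fun v => v.val < m)

lemma pre_zero {ℓ : ℕ} : pre ℓ 0 = ∅ := by simp [pre]
lemma pre_top {ℓ : ℕ} : pre ℓ ℓ = univ := by simp [pre, Fin.is_lt]

lemma shearer {ℓ k : ℕ} (hk1 : 1 < k) (hkℓ : k ≤ ℓ) (F : Finset (Fin ℓ) → ℝ)
    (h0 : ∀ S, 0 ≤ F S) (hmono : ∀ A B : Finset (Fin ℓ), A ⊆ B → F A ≤ F B)
    (hsub : Submodular F)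
    (hedge : ∀ e ∈ (univ : Finset (Fin ℓ)).powersetCard k, F e ≤ 1) :
    F univ ≤ (ℓ : ℝ) / k := by
  classical
  set d : Fin ℓ → ℝ := fun v => F (pre ℓ (v.val + 1)) - F (pre ℓ v.val) with hd
  have claimA : ∀ (v : Fin ℓ) (S : Finset (Fin ℓ)), S ⊆ pre ℓ v.val →
      d v ≤ F (insert v S) - F S := by
    intro v S hS
    have hA : insert v S ∪ pre ℓ v.val = pre ℓ (v.val + 1) := by
      ext x
      simp only [pre, Finset.mem_union, Finset.mem_insert, Finset.mem_filter, Finset.mem_univ,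
        true_and]
      constructor
      · rintro (⟨rfl | hx⟩ | hx)
        · omega
        · have := (Finset.mem_filter.1 (hS hx)).2
          omega
        · omega
      · intro hx
        rcases Nat.lt_or_ge x.val v.val with h | h
        · exact Or.inr h
        · have : x = v := Fin.ext (by omega)
          exact Or.inl (Or.inl this)
    have hB : insert v S ∩ pre ℓ v.val = S := by
      ext x
      simp only [Finset.mem_inter, Finset.mem_insert, pre, Finset.mem_filter, Finset.mem_univ,
        true_and]
      constructor
      · rintro ⟨rfl | hx, hlt⟩
        · omega
        · exact hx
      · intro hx
        exact ⟨Or.inr hx, (Finset.mem_filter.1 (hS hx)).2⟩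
    have := hsub (insert v S) (pre ℓ v.val)
    rw [hA, hB] at this
    simp only [hd]
    linarith
  have claimB : ∀ S : Finset (Fin ℓ), F ∅ + ∑ v ∈ S, d v ≤ F S := by
    intro S
    induction S using Finset.induction_on_max with
    | empty => simp
    | insert a s ha ih =>
      have hanotmem : a ∉ s := fun h => lt_irrefl a (ha a h)
      rw [Finset.sum_insert hanotmem]
      have hsub' : s ⊆ pre ℓ a.val := by
        intro x hx
        simp only [pre, Finset.mem_filter, Finset.mem_univ, true_and]
        exact ha x hx
      have := claimA a s hsub'
      linarith
  have claimC : ∑ v : Fin ℓ, d v = F univ - F ∅ := by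
    have : ∑ v : Fin ℓ, d v
        = ∑ i ∈ Finset.range ℓ, ((fun m => F (pre ℓ m)) (i+1) - (fun m => F (pre ℓ m)) i) := by
      rw [Fin.sum_univ_eq_sum_range (fun i => F (pre ℓ (i+1)) - F (pre ℓ i))]
    rw [this, Finset.sum_range_sub (fun m => F (pre ℓ m)), pre_zero, pre_top]
  set E := (univ : Finset (Fin ℓ)).powersetCard k with hE
  have count_mem' : ∀ v : Fin ℓ, (E.filter (fun e => v ∈ e)).card = (ℓ-1).choose (k-1) :=
    fun v => count_mem (by omega) hkℓ v
  have claimD : ∑ e ∈ E, ∑ v ∈ e, d v = ∑ v : Fin ℓ, ((ℓ-1).choose (k-1) : ℝ) * d v := by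
    have step1 : ∀ e ∈ E, ∑ v ∈ e, d v = ∑ v : Fin ℓ, if v ∈ e then d v else 0 := by
      intro e _
      rw [Finset.sum_ite_mem]
      congr 1
      exact (Finset.univ_inter e).symm
    rw [Finset.sum_congr rfl step1, Finset.sum_comm]
    refine Finset.sum_congr rfl fun v _ => ?_
    rw [← Finset.sum_filter, Finset.sum_const, count_mem' v]
    simp [nsmul_eq_mul]
  have hEcard : E.card = ℓ.choose k := by
    rw [hE, Finset.card_powersetCard, Finset.card_univ, Fintype.card_fin]
  have hEne : E.Nonempty := by
    obtain ⟨e, he, _, _⟩ := pair_edge hk1 hkℓ (⟨0, by omega⟩ : Fin ℓ) ⟨0, by omega⟩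
    exact ⟨e, he⟩
  have hce : k * ℓ.choose k = ℓ * (ℓ-1).choose (k-1) := choose_identity (by omega) hkℓ
  have hC'pos : (0:ℝ) < ((ℓ-1).choose (k-1) : ℝ) := by
    exact_mod_cast Nat.choose_pos (by omega : k - 1 ≤ ℓ - 1)
  have hc0le : F ∅ ≤ 1 := by
    obtain ⟨e, he⟩ := hEne
    exact le_trans (hmono ∅ e (Finset.empty_subset e)) (hedge e he)
  have key : ((ℓ-1).choose (k-1) : ℝ) * (F univ - F ∅) ≤ (ℓ.choose k : ℝ) * (1 - F ∅) := by
    have h1 : ∑ e ∈ E, ∑ v ∈ e, d v ≤ ∑ e ∈ E, (F e - F ∅) := by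
      refine Finset.sum_le_sum fun e he => ?_
      have := claimB e
      linarith
    have h2 : ∑ e ∈ E, (F e - F ∅) ≤ ∑ e ∈ E, (1 - F ∅) := by
      refine Finset.sum_le_sum fun e he => ?_
      have := hedge e he
      linarith
    rw [Finset.sum_const, hEcard] at h2
    calc ((ℓ-1).choose (k-1) : ℝ) * (F univ - F ∅)
        = ∑ v : Fin ℓ, ((ℓ-1).choose (k-1) : ℝ) * d v := by
          rw [← Finset.mul_sum, claimC]
      _ = ∑ e ∈ E, ∑ v ∈ e, d v := claimD.symm
      _ ≤ (ℓ.choose k : ℝ) * (1 - F ∅) := by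
          refine le_trans h1 (le_trans h2 ?_)
          simp [nsmul_eq_mul]
  have hkpos : (0:ℝ) < (k:ℝ) := by
    have : 0 < k := by omega
    exact_mod_cast this
  have hcast : (k:ℝ) * (ℓ.choose k:ℝ) = (ℓ:ℝ) * ((ℓ-1).choose (k-1):ℝ) := by
    exact_mod_cast hce
  have hkl : (k:ℝ) ≤ (ℓ:ℝ) := by exact_mod_cast hkℓ
  have h0' : 0 ≤ F ∅ := h0 ∅
  have step : (k:ℝ) * (((ℓ-1).choose (k-1):ℝ) * (F univ - F ∅))
      ≤ ((ℓ:ℝ) * ((ℓ-1).choose (k-1):ℝ)) * (1 - F ∅) := by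
    calc (k:ℝ) * (((ℓ-1).choose (k-1):ℝ) * (F univ - F ∅))
        ≤ (k:ℝ) * ((ℓ.choose k : ℝ) * (1 - F ∅)) := by
          apply mul_le_mul_of_nonneg_left key hkpos.le
      _ = ((k:ℝ) * (ℓ.choose k:ℝ)) * (1 - F ∅) := by ring
      _ = ((ℓ:ℝ) * ((ℓ-1).choose (k-1):ℝ)) * (1 - F ∅) := by rw [hcast]
  have step2 : ((ℓ-1).choose (k-1):ℝ) * ((k:ℝ) * (F univ - F ∅))
      ≤ ((ℓ-1).choose (k-1):ℝ) * ((ℓ:ℝ) * (1 - F ∅)) := by linarith [step]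
  have step3 : (k:ℝ) * (F univ - F ∅) ≤ (ℓ:ℝ) * (1 - F ∅) :=
    (mul_le_mul_iff_right₀ hC'pos).mp step2
  have step4 : (k:ℝ) * F ∅ ≤ (ℓ:ℝ) * F ∅ := mul_le_mul_of_nonneg_right hkl h0'
  rw [le_div_iff₀ hkpos]
  linarith

section helly
variable {ι : Type*} [DecidableEq ι] {T : SimpleGraph ι}

lemma isPath_append {u v w : ι} {p : T.Walk u v} {q : T.Walk v w}
    (hp : p.IsPath) (hq : q.IsPath)
    (h : ∀ x, x ∈ p.support → x ∈ q.support → x = v) : (p.append q).IsPath := by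
  rw [SimpleGraph.Walk.isPath_def, SimpleGraph.Walk.support_append]
  apply List.Nodup.append hp.support_nodup (hq.support_nodup.sublist (List.tail_sublist _))
  intro x hxp hxq
  have hx2 : x ∈ q.support := List.mem_of_mem_tail hxq
  have hxv : x = v := h x hxp hx2
  have hnd := hq.support_nodup
  rw [q.support_eq_cons] at hnd
  exact (List.nodup_cons.1 hnd).1 (hxv ▸ hxq)

/-- a connected induced set contains any path between its members -/
lemma path_subset (hT : T.IsTree) {S : Set ι} (hS : (T.induce S).Connected)
    {a b : ι} (ha : a ∈ S) (hb : b ∈ S) {p : T.Walk a b} (hp : p.IsPath) :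
    ∀ x ∈ p.support, x ∈ S := by
  obtain ⟨w⟩ := hS.preconnected ⟨a, ha⟩ ⟨b, hb⟩
  have hmap : ∀ x ∈ ((w.map (SimpleGraph.Embedding.induce S).toHom).support), x ∈ S := by
    intro x hx
    rw [SimpleGraph.Walk.support_map] at hx
    obtain ⟨y, _, rfl⟩ := List.mem_map.1 hx
    exact y.2
  set w' : T.Walk a b := (w.map (SimpleGraph.Embedding.induce S).toHom)
  have hpath := (w'.toPath).2
  have heq : (w'.toPath).1 = p := hT.existsUnique_path a b |>.unique hpath hp
  intro x hx
  rw [← heq] at hx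
  exact hmap x (SimpleGraph.Walk.support_bypass_subset _ hx)

theorem helly {n : ℕ} {T : SimpleGraph (Fin n)} (hT : T.IsTree)
    {m : ℕ} (hm : 0 < m) (A : Fin m → Set (Fin n))
    (hconn : ∀ v, (T.induce (A v)).Connected)
    (hpair : ∀ u v, (A u ∩ A v).Nonempty) :
    ∃ t, ∀ v, t ∈ A v := by
  classical
  have hpath : ∀ a b : Fin n, ∃! p : T.Walk a b, p.IsPath := hT.existsUnique_path
  set P : ∀ a b : Fin n, T.Walk a b := fun a b => (hpath a b).exists.choose with hP
  have hPp : ∀ a b, (P a b).IsPath := fun a b => (hpath a b).exists.choose_spec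
  have hPu : ∀ {a b : Fin n} (p : T.Walk a b), p.IsPath → p = P a b :=
    fun {a b} p hp => (hpath a b).unique hp (hPp a b)
  obtain ⟨r⟩ : Nonempty (Fin n) := hT.isConnected.nonempty
  set len : Fin n → ℕ := fun g => (P r g).length with hlen
  have hgate : ∀ v : Fin m, ∃ g ∈ (A v).toFinset, ∀ x ∈ (A v).toFinset, len g ≤ len x := by
    intro v
    apply Finset.exists_min_image
    obtain ⟨a, ha, _⟩ := hpair v v
    exact ⟨a, Set.mem_toFinset.2 ha⟩
  choose g hgmem hgmin using hgate
  have hgA : ∀ v, g v ∈ A v := fun v => Set.mem_toFinset.1 (hgmem v)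
  have hgmin' : ∀ v, ∀ x ∈ A v, len (g v) ≤ len x :=
    fun v x hx => hgmin v x (Set.mem_toFinset.2 hx)
  have huniq : ∀ v : Fin m, ∀ x, x ∈ (P r (g v)).support → x ∈ A v → x = g v := by
    intro v x hx hxA
    have htk := (hPp r (g v)).takeUntil hx
    have heq : (P r (g v)).takeUntil x hx = P r x := hPu _ htk
    have hlen1 : len x ≤ len (g v) := by
      rw [hlen]
      simp only
      rw [← heq]
      exact SimpleGraph.Walk.length_takeUntil_le _ hx
    have hlen2 : len (g v) ≤ len x := hgmin' v x hxA
    have hlen3 : len x = len (g v) := le_antisymm hlen1 hlen2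
    have hspec := (P r (g v)).take_spec hx
    have hlen4 := congrArg SimpleGraph.Walk.length hspec
    rw [SimpleGraph.Walk.length_append] at hlen4
    have : ((P r (g v)).dropUntil x hx).length = 0 := by
      have : ((P r (g v)).takeUntil x hx).length = len x := by rw [heq]
      rw [this] at hlen4
      simp only [hlen] at hlen3 hlen4 ⊢
      omega
    exact (SimpleGraph.Walk.eq_of_length_eq_zero this)
  have hgateprop : ∀ v : Fin m, ∀ a ∈ A v, (g v) ∈ (P r a).support := by
    intro v a ha
    have hsub2 : ∀ x ∈ (P (g v) a).support, x ∈ A v :=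
      path_subset hT (hconn v) (hgA v) ha (hPp _ _)
    have happ : ((P r (g v)).append (P (g v) a)).IsPath := by
      apply isPath_append (hPp _ _) (hPp _ _)
      intro x hx1 hx2
      exact huniq v x hx1 (hsub2 x hx2)
    have heq : (P r (g v)).append (P (g v) a) = P r a := hPu _ happ
    rw [← heq, SimpleGraph.Walk.mem_support_append_iff]
    exact Or.inl (SimpleGraph.Walk.end_mem_support _)
  obtain ⟨vs, _, hvs⟩ := Finset.exists_max_image (univ : Finset (Fin m)) (fun v => len (g v))
    (by rwa [Finset.univ_nonempty_iff, ← Fin.pos_iff_nonempty])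
  refine ⟨g vs, fun w => ?_⟩
  obtain ⟨a, havs, haw⟩ := hpair vs w
  have h1 : g vs ∈ (P r a).support := hgateprop vs a havs
  have h2 : g w ∈ (P r a).support := hgateprop w a haw
  have hspec := (P r a).take_spec h2
  rw [← hspec, SimpleGraph.Walk.mem_support_append_iff] at h1
  rcases h1 with h1 | h1
  · have htk := (hPp r a).takeUntil h2
    have heqq : (P r a).takeUntil (g w) h2 = P r (g w) := hPu _ htk
    rw [heqq] at h1
    have htk2 := (hPp r (g w)).takeUntil h1
    have heq2 : (P r (g w)).takeUntil (g vs) h1 = P r (g vs) := hPu _ htk2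
    have hle : len (g vs) ≤ len (g w) := by
      rw [hlen]
      simp only
      rw [← heq2]
      exact SimpleGraph.Walk.length_takeUntil_le _ h1
    have hge : len (g w) ≤ len (g vs) := hvs w (Finset.mem_univ w)
    have hspec2 := (P r (g w)).take_spec h1
    have hlen4 := congrArg SimpleGraph.Walk.length hspec2
    rw [SimpleGraph.Walk.length_append] at hlen4
    have hzero : ((P r (g w)).dropUntil (g vs) h1).length = 0 := by
      have : ((P r (g w)).takeUntil (g vs) h1).length = len (g vs) := by rw [heq2]
      rw [this] at hlen4
      simp only [hlen] at hle hge hlen4 ⊢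
      omega
    have : g vs = g w := SimpleGraph.Walk.eq_of_length_eq_zero hzero
    rw [this]
    exact hgA w
  · have hdp := (hPp r a).dropUntil h2
    have heqd : (P r a).dropUntil (g w) h2 = P (g w) a := hPu _ hdp
    rw [heqd] at h1
    exact path_subset hT (hconn w) (hgA w) haw (hPp _ _) _ h1
end helly

lemma wed_count {ℓ k j : ℕ} (hk1 : 1 < k) (hkℓ : k ≤ ℓ)
    (ψ : Fin j → Finset (Fin ℓ)) (hne : ∀ i, (ψ i).Nonempty) :
    j * k ≤ (((univ : Finset (Fin ℓ)).powersetCard k).sup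
      (fun e => (Finset.univ.filter fun i : Fin j => ((ψ i) ∩ e).Nonempty).card)) * ℓ := by
  classical
  set E := (univ : Finset (Fin ℓ)).powersetCard k with hE
  set W := E.sup (fun e => (Finset.univ.filter fun i : Fin j => ((ψ i) ∩ e).Nonempty).card)
    with hW
  choose v hv using fun i => hne i
  have hper : ∀ e ∈ E, (Finset.univ.filter fun i : Fin j => v i ∈ e).card ≤ W := by
    intro e he
    refine le_trans (Finset.card_le_card ?_) (Finset.le_sup
      (f := fun e => (Finset.univ.filter fun i : Fin j => ((ψ i) ∩ e).Nonempty).card) he)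
    intro i hi
    rw [Finset.mem_filter] at hi ⊢
    exact ⟨hi.1, ⟨v i, Finset.mem_inter.2 ⟨hv i, hi.2⟩⟩⟩
  have hsum : j * (ℓ-1).choose (k-1) ≤ W * ℓ.choose k := by
    have h1 : ∑ e ∈ E, (Finset.univ.filter fun i : Fin j => v i ∈ e).card ≤ ∑ _e ∈ E, W :=
      Finset.sum_le_sum hper
    rw [Finset.sum_const, smul_eq_mul, mul_comm] at h1
    have h2 : ∑ e ∈ E, (Finset.univ.filter fun i : Fin j => v i ∈ e).card
        = j * (ℓ-1).choose (k-1) := by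
      have hstep : ∀ e ∈ E, (Finset.univ.filter fun i : Fin j => v i ∈ e).card
          = ∑ i : Fin j, if v i ∈ e then 1 else 0 := by
        intro e _
        rw [Finset.card_filter]
      rw [Finset.sum_congr rfl hstep, Finset.sum_comm]
      have hstep2 : ∀ i : Fin j, ∑ e ∈ E, (if v i ∈ e then 1 else 0) = (ℓ-1).choose (k-1) := by
        intro i
        rw [← Finset.card_filter]
        exact count_mem (by omega) hkℓ (v i)
      rw [Finset.sum_congr rfl (fun i _ => hstep2 i), Finset.sum_const, smul_eq_mul,
        Finset.card_univ, Fintype.card_fin]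
    rw [h2] at h1
    calc j * (ℓ-1).choose (k-1) ≤ W * E.card := h1
      _ = W * ℓ.choose k := by
          rw [hE, Finset.card_powersetCard, Finset.card_univ, Fintype.card_fin]
  have hCpos : 0 < (ℓ-1).choose (k-1) := Nat.choose_pos (by omega)
  have hfin : j * k * (ℓ-1).choose (k-1) ≤ W * ℓ * (ℓ-1).choose (k-1) := by
    calc j * k * (ℓ-1).choose (k-1) = k * (j * (ℓ-1).choose (k-1)) := by ring
      _ ≤ k * (W * ℓ.choose k) := Nat.mul_le_mul_left _ hsum
      _ = W * (k * ℓ.choose k) := by ring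
      _ = W * (ℓ * (ℓ-1).choose (k-1)) := by rw [choose_identity (by omega) hkℓ]
      _ = W * ℓ * (ℓ-1).choose (k-1) := by ring
  exact Nat.le_of_mul_le_mul_right hfin hCpos

lemma fiber_card {ℓ : ℕ} (hℓ : 0 < ℓ) (v : Fin ℓ) :
    ((univ : Finset (Fin (2*ℓ))).filter
      (fun i => (⟨i.val % ℓ, Nat.mod_lt _ hℓ⟩ : Fin ℓ) = v)).card = 2 := by
  classical
  have hset : ((univ : Finset (Fin (2*ℓ))).filter
      (fun i => (⟨i.val % ℓ, Nat.mod_lt _ hℓ⟩ : Fin ℓ) = v))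
      = {⟨v.val, by omega⟩, ⟨v.val + ℓ, by omega⟩} := by
    ext i
    simp only [Finset.mem_filter, Finset.mem_univ, true_and, Finset.mem_insert,
      Finset.mem_singleton, Fin.ext_iff]
    constructor
    · intro h
      have hmod : i.val % ℓ = v.val := by
        simpa [Fin.ext_iff] using h
      have hd := Nat.div_add_mod i.val ℓ
      have hlt : i.val / ℓ < 2 := Nat.div_lt_of_lt_mul (by omega)
      interval_cases h2 : (i.val / ℓ)
      · left; omega
      · right; omega
    · rintro (h | h)
      · rw [h]; exact Nat.mod_eq_of_lt v.isLt
      · rw [h, Nat.add_mod_right]; exact Nat.mod_eq_of_lt v.isLt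
  rw [hset]
  rw [Finset.card_insert_of_notMem (by simp [Fin.ext_iff]; omega), Finset.card_singleton]

lemma mod_count {ℓ k : ℕ} (hℓ : 0 < ℓ) (e : Finset (Fin ℓ)) (he : e.card = k) :
    ((univ : Finset (Fin (2*ℓ))).filter
      (fun i => (⟨i.val % ℓ, Nat.mod_lt _ hℓ⟩ : Fin ℓ) ∈ e)).card = 2 * k := by
  classical
  set φ : Fin (2*ℓ) → Fin ℓ := fun i => ⟨i.val % ℓ, Nat.mod_lt _ hℓ⟩ with hφ
  show #(univ.filter (fun i => φ i ∈ e)) = 2 * k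
  rw [Finset.card_eq_sum_card_fiberwise (f := φ) (s := univ.filter (fun i => φ i ∈ e)) (t := e)
    (fun x hx => (Finset.mem_filter.1 (Finset.mem_coe.1 hx)).2)]
  have hfib : ∀ v ∈ e, ((univ.filter (fun i => φ i ∈ e)).filter (fun i => φ i = v)).card = 2 := by
    intro v hv
    rw [Finset.filter_filter]
    have heq : Finset.filter (fun a => φ a ∈ e ∧ φ a = v) univ
        = Finset.filter (fun a => φ a = v) univ := by
      apply Finset.filter_congr
      intro i _
      constructor
      · exact fun h => h.2
      · intro h; exact ⟨h ▸ hv, h⟩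
    rw [heq]
    exact fiber_card hℓ v
  rw [Finset.sum_congr rfl hfib, Finset.sum_const, smul_eq_mul, he, mul_comm]

end HCAux
end HypercliqueAux

set_option maxHeartbeats 1000000 in
/-- For `H_{ℓ,k}` with `1 < k ≤ ℓ`: the identity embedding of the `ℓ`-clique has
weak edge depth `k`, there is a fractional edge cover of total weight `ℓ/k`, and
`emb = subw = fhw = ℓ/k`. -/
theorem hyperclique_tight (ℓ k : ℕ) (hk1 : 1 < k) (hkℓ : k ≤ ℓ) :
    (hyperclique ℓ k).IsCliqueEmb ℓ (fun i : Fin ℓ => {i}) ∧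
    (hyperclique ℓ k).wedOf (fun i : Fin ℓ => ({i} : Finset (Fin ℓ))) = k ∧
    (∃ w : Finset (Fin ℓ) → ℝ,
      IsFracCover (hyperclique ℓ k) Finset.univ w ∧
      ∑ e ∈ (hyperclique ℓ k).edges, w e ≤ (ℓ : ℝ) / k) ∧
    embPower (hyperclique ℓ k) = (ℓ : ℝ) / k ∧
    subw (hyperclique ℓ k) = (ℓ : ℝ) / k ∧
    fhw (hyperclique ℓ k) = (ℓ : ℝ) / k := by
  classical
  have hl0 : 0 < ℓ := by omega
  set E := (univ : Finset (Fin ℓ)).powersetCard k with hE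
  have hedges : (hyperclique ℓ k).edges = E := rfl
  have hEne : E.Nonempty := by
    obtain ⟨e, he, _, _⟩ := HCAux.pair_edge hk1 hkℓ (⟨0, hl0⟩ : Fin ℓ) ⟨0, hl0⟩
    exact ⟨e, he⟩
  have hkR : (0:ℝ) < (k:ℝ) := by exact_mod_cast (by omega : 0 < k)
  have hlkR : (0:ℝ) ≤ (ℓ:ℝ)/k := by positivity
  have hcardE : ∀ e ∈ E, e.card = k := fun e he => (Finset.mem_powersetCard.1 he).2
  -- Part A : identity embedding
  have partA : (hyperclique ℓ k).IsCliqueEmb ℓ (fun i : Fin ℓ => {i}) := by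
    refine ⟨fun i => Finset.singleton_nonempty i, fun i => ?_, fun i j hij => ?_⟩
    · intro a ha b hb
      rw [Finset.mem_singleton] at ha hb
      rw [ha, hb]
    · obtain ⟨e, he, hi, hj⟩ := HCAux.pair_edge hk1 hkℓ i j
      exact Or.inr ⟨e, he, ⟨i, Finset.mem_inter.2 ⟨hi, Finset.mem_singleton_self i⟩⟩,
        ⟨j, Finset.mem_inter.2 ⟨hj, Finset.mem_singleton_self j⟩⟩⟩
  -- common filter rewriting
  have filter_eq : ∀ (j0 : ℕ) (φ : Fin j0 → Fin ℓ) (e : Finset (Fin ℓ)),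
      (univ.filter fun i : Fin j0 => ((({φ i} : Finset (Fin ℓ))) ∩ e).Nonempty)
        = (univ.filter fun i : Fin j0 => φ i ∈ e) := by
    intro j0 φ e
    apply Finset.filter_congr
    intro i _
    constructor
    · rintro ⟨x, hx⟩
      rw [Finset.mem_inter, Finset.mem_singleton] at hx
      rw [← hx.1]
      exact hx.2
    · intro h
      exact ⟨φ i, Finset.mem_inter.2 ⟨Finset.mem_singleton_self _, h⟩⟩
  -- Part B : wedOf of the identity embedding
  have partB : (hyperclique ℓ k).wedOf (fun i : Fin ℓ => ({i} : Finset (Fin ℓ))) = k := by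
    show E.sup _ = k
    rw [Finset.sup_congr rfl (g := fun _ => k) ?_]
    · exact Finset.sup_const hEne k
    · intro e he
      rw [filter_eq ℓ (fun i => i) e]
      have : (univ.filter fun i : Fin ℓ => i ∈ e) = e := by
        ext x; simp
      rw [this]
      exact hcardE e he
  -- Part C : fractional cover
  set C' := (ℓ-1).choose (k-1) with hC'
  have hC'R : (0:ℝ) < (C':ℝ) := by
    exact_mod_cast Nat.choose_pos (by omega : k - 1 ≤ ℓ - 1)
  have hceR : (k:ℝ) * (ℓ.choose k:ℝ) = (ℓ:ℝ) * (C':ℝ) := by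
    exact_mod_cast HCAux.choose_identity (by omega) hkℓ
  set w0 : Finset (Fin ℓ) → ℝ := fun e => if e ∈ E then 1/(C':ℝ) else 0 with hw0
  have hcover : IsFracCover (hyperclique ℓ k) Finset.univ w0 := by
    refine ⟨fun e => ?_, fun e he => ?_, fun v _ => ?_⟩
    · by_cases h : e ∈ E <;> simp [hw0, h] <;> positivity
    · rw [hedges] at he
      simp [hw0, he]
    · rw [hedges]
      have hstep : ∀ e ∈ E, (if v ∈ e then w0 e else 0)
          = (if v ∈ e then 1/(C':ℝ) else 0) := by
        intro e he
        simp [hw0, he]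
      rw [Finset.sum_congr rfl hstep, ← Finset.sum_filter, Finset.sum_const,
        HCAux.count_mem (by omega) hkℓ v, nsmul_eq_mul, mul_one_div, ← hC',
        div_self (ne_of_gt hC'R)]
  have htotal : ∑ e ∈ (hyperclique ℓ k).edges, w0 e = (ℓ:ℝ)/k := by
    rw [hedges]
    have hstep : ∀ e ∈ E, w0 e = 1/(C':ℝ) := fun e he => by simp [hw0, he]
    rw [Finset.sum_congr rfl hstep, Finset.sum_const, hE, Finset.card_powersetCard,
      Finset.card_univ, Fintype.card_fin, nsmul_eq_mul, mul_one_div]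
    rw [div_eq_div_iff hC'R.ne' hkR.ne']
    linarith [hceR]
  have partC : ∃ w : Finset (Fin ℓ) → ℝ,
      IsFracCover (hyperclique ℓ k) Finset.univ w ∧
      ∑ e ∈ (hyperclique ℓ k).edges, w e ≤ (ℓ : ℝ) / k :=
    ⟨w0, hcover, le_of_eq htotal⟩
  -- any fractional cover of univ has weight ≥ ℓ/k
  have cover_lb : ∀ w : Finset (Fin ℓ) → ℝ, IsFracCover (hyperclique ℓ k) Finset.univ w →
      (ℓ:ℝ)/k ≤ ∑ e ∈ E, w e := by
    intro w hw
    obtain ⟨hpos, _, hcov⟩ := hw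
    have h1 : (ℓ:ℝ) ≤ ∑ v : Fin ℓ, ∑ e ∈ E, (if v ∈ e then w e else 0) := by
      calc (ℓ:ℝ) = ∑ _v : Fin ℓ, (1:ℝ) := by simp
        _ ≤ _ := Finset.sum_le_sum (fun v _ => hcov v (Finset.mem_univ v))
    rw [Finset.sum_comm] at h1
    have h2 : ∀ e ∈ E, ∑ v : Fin ℓ, (if v ∈ e then w e else 0) = (k:ℝ) * w e := by
      intro e he
      have hfe : univ.filter (fun v : Fin ℓ => v ∈ e) = e := by ext x; simp
      rw [← Finset.sum_filter, hfe, Finset.sum_const, hcardE e he, nsmul_eq_mul]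
    rw [Finset.sum_congr rfl h2, ← Finset.mul_sum] at h1
    rw [div_le_iff₀ hkR]
    linarith
  -- any tree decomposition has a full bag
  have bag_univ : ∀ {n : ℕ} {T : SimpleGraph (Fin n)} {χ : Fin n → Finset (Fin ℓ)},
      IsTreeDecomp (hyperclique ℓ k) T χ → ∃ t, χ t = Finset.univ := by
    intro n T χ td
    have hpair : ∀ u v : Fin ℓ, ({t | u ∈ χ t} ∩ {t | v ∈ χ t} : Set (Fin n)).Nonempty := by
      intro u v
      obtain ⟨e, he, hu, hv⟩ := HCAux.pair_edge hk1 hkℓ u v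
      obtain ⟨t0, ht0⟩ := td.covers e (by rw [hedges]; exact he)
      exact ⟨t0, ht0 hu, ht0 hv⟩
    obtain ⟨t, ht⟩ := HCAux.helly td.tree hl0 (fun v => {t | v ∈ χ t}) td.conn hpair
    exact ⟨t, Finset.eq_univ_iff_forall.2 (fun v => ht v)⟩
  -- the trivial tree decomposition
  have td0 : IsTreeDecomp (hyperclique ℓ k) (⊥ : SimpleGraph (Fin 1))
      (fun _ => (Finset.univ : Finset (Fin ℓ))) := by
    refine ⟨⟨?_, fun u c hc => (hc.ne_bot rfl)⟩,
      fun e _ => ⟨0, Finset.subset_univ e⟩, fun v => ?_⟩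
    · rw [SimpleGraph.connected_iff]
      refine ⟨fun u v => ?_, ⟨0⟩⟩
      have h := Subsingleton.elim u v
      subst h
      exact SimpleGraph.Reachable.refl _
    · rw [SimpleGraph.connected_iff]
      refine ⟨fun a b => ?_, ⟨⟨0, Finset.mem_univ v⟩⟩⟩
      have h : a = b := Subtype.ext (Subsingleton.elim a.1 b.1)
      subst h
      exact SimpleGraph.Reachable.refl _
  -- fhw
  have fhw_mem : (ℓ:ℝ)/k ∈ {b : ℝ | ∃ (n : ℕ) (T : SimpleGraph (Fin n))
      (χ : Fin n → Finset (Fin ℓ)), IsTreeDecomp (hyperclique ℓ k) T χ ∧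
      ∀ t, ∃ w : Finset (Fin ℓ) → ℝ, IsFracCover (hyperclique ℓ k) (χ t) w ∧
        ∑ e ∈ (hyperclique ℓ k).edges, w e ≤ (ℓ:ℝ)/k} :=
    ⟨1, ⊥, fun _ => Finset.univ, td0, fun _ => ⟨w0, hcover, le_of_eq htotal⟩⟩
  have fhw_lb : ∀ b ∈ {b : ℝ | ∃ (n : ℕ) (T : SimpleGraph (Fin n))
      (χ : Fin n → Finset (Fin ℓ)), IsTreeDecomp (hyperclique ℓ k) T χ ∧
      ∀ t, ∃ w : Finset (Fin ℓ) → ℝ, IsFracCover (hyperclique ℓ k) (χ t) w ∧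
        ∑ e ∈ (hyperclique ℓ k).edges, w e ≤ b}, (ℓ:ℝ)/k ≤ b := by
    rintro b ⟨n, T, χ, td, hb⟩
    obtain ⟨t, ht⟩ := bag_univ td
    obtain ⟨w, hw, hwb⟩ := hb t
    rw [ht] at hw
    rw [hedges] at hwb
    exact le_trans (cover_lb w hw) hwb
  have partF : fhw (hyperclique ℓ k) = (ℓ:ℝ)/k := by
    refine le_antisymm (csInf_le ⟨(ℓ:ℝ)/k, fun b hb => fhw_lb b hb⟩ ?_)
      (le_csInf ⟨(ℓ:ℝ)/k, ?_⟩ fhw_lb)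
    · exact fhw_mem
    · exact fhw_mem
  -- subw
  have subw_inner : ∀ F : Finset (Fin ℓ) → ℝ, (∀ A B : Finset (Fin ℓ), A ⊆ B → F A ≤ F B) →
      sInf {b : ℝ | ∃ (n : ℕ) (T : SimpleGraph (Fin n)) (χ : Fin n → Finset (Fin ℓ)),
        IsTreeDecomp (hyperclique ℓ k) T χ ∧ ∀ t, F (χ t) ≤ b} = F Finset.univ := by
    intro F hmono
    have hmem : F Finset.univ ∈ {b : ℝ | ∃ (n : ℕ) (T : SimpleGraph (Fin n))
        (χ : Fin n → Finset (Fin ℓ)), IsTreeDecomp (hyperclique ℓ k) T χ ∧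
        ∀ t, F (χ t) ≤ b} :=
      ⟨1, ⊥, fun _ => Finset.univ, td0, fun _ => le_refl _⟩
    have hlb : ∀ b ∈ {b : ℝ | ∃ (n : ℕ) (T : SimpleGraph (Fin n))
        (χ : Fin n → Finset (Fin ℓ)), IsTreeDecomp (hyperclique ℓ k) T χ ∧
        ∀ t, F (χ t) ≤ b}, F Finset.univ ≤ b := by
      rintro b ⟨n, T, χ, td, hb⟩
      obtain ⟨t, ht⟩ := bag_univ td
      rw [← ht]
      exact hb t
    exact le_antisymm (csInf_le ⟨F Finset.univ, fun b hb => hlb b hb⟩ hmem)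
      (le_csInf ⟨_, hmem⟩ hlb)
  have subw_ub : ∀ x ∈ {w : ℝ | ∃ F : Finset (Fin ℓ) → ℝ,
      (∀ S, 0 ≤ F S) ∧ (∀ A B : Finset (Fin ℓ), A ⊆ B → F A ≤ F B) ∧ Submodular F ∧
      (∀ e ∈ (hyperclique ℓ k).edges, F e ≤ 1) ∧
      w = sInf {b : ℝ | ∃ (n : ℕ) (T : SimpleGraph (Fin n)) (χ : Fin n → Finset (Fin ℓ)),
        IsTreeDecomp (hyperclique ℓ k) T χ ∧ ∀ t, F (χ t) ≤ b}}, x ≤ (ℓ:ℝ)/k := by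
    rintro x ⟨F, h0, hmono, hsub, hedge, rfl⟩
    rw [subw_inner F hmono]
    exact HCAux.shearer hk1 hkℓ F h0 hmono hsub (fun e he => hedge e (by rw [hedges]; exact he))
  have subw_mem : (ℓ:ℝ)/k ∈ {w : ℝ | ∃ F : Finset (Fin ℓ) → ℝ,
      (∀ S, 0 ≤ F S) ∧ (∀ A B : Finset (Fin ℓ), A ⊆ B → F A ≤ F B) ∧ Submodular F ∧
      (∀ e ∈ (hyperclique ℓ k).edges, F e ≤ 1) ∧
      w = sInf {b : ℝ | ∃ (n : ℕ) (T : SimpleGraph (Fin n)) (χ : Fin n → Finset (Fin ℓ)),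
        IsTreeDecomp (hyperclique ℓ k) T χ ∧ ∀ t, F (χ t) ≤ b}} := by
    refine ⟨fun S => (S.card : ℝ)/k, fun S => by positivity, fun A B hAB => ?_, ?_, ?_, ?_⟩
    · have hc : (A.card:ℝ) ≤ (B.card:ℝ) := by exact_mod_cast Finset.card_le_card hAB
      rw [div_le_div_iff₀ hkR hkR]
      exact mul_le_mul_of_nonneg_right hc hkR.le
    · intro A B
      apply le_of_eq
      rw [← add_div, ← add_div]
      congr 1
      exact_mod_cast Finset.card_union_add_card_inter A B
    · intro e he
      rw [hedges] at he
      show ((e.card : ℕ):ℝ)/k ≤ 1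
      rw [hcardE e he]
      exact le_of_eq (div_self (ne_of_gt hkR))
    · have h := subw_inner (fun S : Finset (Fin ℓ) => (S.card:ℝ)/k) (fun A B hAB => by
        have hc : (A.card:ℝ) ≤ (B.card:ℝ) := by exact_mod_cast Finset.card_le_card hAB
        rw [div_le_div_iff₀ hkR hkR]
        exact mul_le_mul_of_nonneg_right hc hkR.le)
      have h2 : (((Finset.univ : Finset (Fin ℓ)).card : ℕ):ℝ)/(k:ℝ) = (ℓ:ℝ)/k := by
        rw [Finset.card_univ, Fintype.card_fin]
      exact (h.trans h2).symm
  have partE : subw (hyperclique ℓ k) = (ℓ:ℝ)/k :=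
    le_antisymm (Real.sSup_le subw_ub hlkR) (le_csSup ⟨(ℓ:ℝ)/k, subw_ub⟩ subw_mem)
  -- embPower
  have wed_lb : ∀ j : ℕ, j * k ≤ (hyperclique ℓ k).wed j * ℓ := by
    intro j
    have hsetne : {w | ∃ ψ : Fin j → Finset (Fin ℓ),
        (hyperclique ℓ k).IsCliqueEmb j ψ ∧ (hyperclique ℓ k).wedOf ψ ≤ w}.Nonempty := by
      set ψc : Fin j → Finset (Fin ℓ) := fun _ => ({⟨0, hl0⟩} : Finset (Fin ℓ)) with hψc
      have hembc : (hyperclique ℓ k).IsCliqueEmb j ψc := by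
        refine ⟨fun i => Finset.singleton_nonempty _, fun i a ha b hb => ?_, fun i i' _ => ?_⟩
        · rw [hψc] at ha hb
          rw [Finset.mem_singleton] at ha hb
          rw [ha, hb]
        · exact Or.inl ⟨⟨0, hl0⟩, Finset.mem_inter.2
            ⟨Finset.mem_singleton_self _, Finset.mem_singleton_self _⟩⟩
      exact ⟨(hyperclique ℓ k).wedOf ψc, ψc, hembc, le_refl _⟩
    have hmem : (hyperclique ℓ k).wed j ∈ {w | ∃ ψ : Fin j → Finset (Fin ℓ),
        (hyperclique ℓ k).IsCliqueEmb j ψ ∧ (hyperclique ℓ k).wedOf ψ ≤ w} :=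
      Nat.sInf_mem hsetne
    obtain ⟨ψ, hemb, hle⟩ := hmem
    have hcnt : j * k ≤ (hyperclique ℓ k).wedOf ψ * ℓ :=
      HCAux.wed_count hk1 hkℓ ψ hemb.1
    exact le_trans hcnt (Nat.mul_le_mul_right ℓ hle)
  have wed2l : (hyperclique ℓ k).wed (2*ℓ) = 2*k := by
    apply le_antisymm
    · apply Nat.sInf_le
      refine ⟨fun i : Fin (2*ℓ) => ({(⟨i.val % ℓ, Nat.mod_lt _ hl0⟩ : Fin ℓ)} :
        Finset (Fin ℓ)), ⟨fun i => Finset.singleton_nonempty _, fun i a ha b hb => ?_,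
        fun i i' _ => ?_⟩, ?_⟩
      · rw [Finset.mem_singleton] at ha hb
        rw [ha, hb]
      · obtain ⟨e, he, h1, h2⟩ := HCAux.pair_edge hk1 hkℓ
          (⟨i.val % ℓ, Nat.mod_lt _ hl0⟩ : Fin ℓ) (⟨i'.val % ℓ, Nat.mod_lt _ hl0⟩ : Fin ℓ)
        exact Or.inr ⟨e, he, ⟨_, Finset.mem_inter.2 ⟨h1, Finset.mem_singleton_self _⟩⟩,
          ⟨_, Finset.mem_inter.2 ⟨h2, Finset.mem_singleton_self _⟩⟩⟩
      · show E.sup _ ≤ 2*k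
        apply Finset.sup_le
        intro e he
        rw [filter_eq (2*ℓ) (fun i : Fin (2*ℓ) => (⟨i.val % ℓ, Nat.mod_lt _ hl0⟩ : Fin ℓ)) e]
        rw [HCAux.mod_count hl0 e (hcardE e he)]
    · have h1 := wed_lb (2*ℓ)
      have h2 : (2*k) * ℓ ≤ (hyperclique ℓ k).wed (2*ℓ) * ℓ := by
        calc (2*k) * ℓ = 2*ℓ*k := by ring
          _ ≤ _ := h1
      exact Nat.le_of_mul_le_mul_right h2 hl0
  have emb_ub : ∀ x ∈ {x : ℝ | ∃ j : ℕ, 3 ≤ j ∧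
      x = (j : ℝ) / ((hyperclique ℓ k).wed j : ℝ)}, x ≤ (ℓ:ℝ)/k := by
    rintro x ⟨j, hj3, rfl⟩
    have hwl := wed_lb j
    have hwpos : 0 < (hyperclique ℓ k).wed j := by
      by_contra h
      push_neg at h
      have hz : (hyperclique ℓ k).wed j = 0 := by omega
      rw [hz, zero_mul] at hwl
      have : 0 < j * k := Nat.mul_pos (by omega) (by omega)
      omega
    have hwR : (0:ℝ) < ((hyperclique ℓ k).wed j : ℝ) := by exact_mod_cast hwpos
    rw [div_le_div_iff₀ hwR hkR]
    have hcast : ((j*k:ℕ):ℝ) ≤ (((hyperclique ℓ k).wed j * ℓ : ℕ):ℝ) := Nat.cast_le.2 hwl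
    push_cast at hcast
    linarith
  have emb_mem : (ℓ:ℝ)/k ∈ {x : ℝ | ∃ j : ℕ, 3 ≤ j ∧
      x = (j : ℝ) / ((hyperclique ℓ k).wed j : ℝ)} := by
    refine ⟨2*ℓ, by omega, ?_⟩
    rw [wed2l]
    push_cast
    rw [div_eq_div_iff hkR.ne' (by positivity : ((2:ℝ)*k) ≠ 0)]
    ring
  have partD : embPower (hyperclique ℓ k) = (ℓ:ℝ)/k :=
    le_antisymm (Real.sSup_le emb_ub hlkR) (le_csSup ⟨(ℓ:ℝ)/k, emb_ub⟩ emb_mem)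
  exact ⟨partA, partB, partC, partD, partE, partF⟩
end
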